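/- Let n ∈ ℕ, m₁ < ... < m_h ∈ ℤ^e, and define D₁ = n^e and D_{i+1} = gcd of the (e,e)-minors of the matrix (nI_e, m₁^T, ..., mᵢ^T). Let v ∈ ℤ^e be nonzero and D̃ = gcd of the (e,e)-minors of (nI_e, m₁^T, ..., mᵢ^T, v^T). Then v ∈ (nℤ)^e + Σ_{j=1}^{i} m_jℤ if and only if D_{i+1} = D̃. Moreover (D_{i+1}/D̃)·v ∈ (nℤ)^e + Σ_{j=1}^{i} m_jℤ, and if D_{i+1} > D̃ then kv ∉ (nℤ)^e + Σ_{j=1}^{i} m_jℤ for all 1 ≤ k < D_{i+1}/D̃. -/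

import Mathlib

/-- The subgroup `(nℤ)^e + m₁ℤ + ⋯ + m_iℤ` of `ℤ^e`. -/
def latticeSpan (e n : ℕ) {i : ℕ} (m : Fin i → Fin e → ℤ) : Set (Fin e → ℤ) :=
  {v | ∃ (a : Fin e → ℤ) (c : Fin i → ℤ), v = (n : ℤ) • a + ∑ j, c j • m j}

/-- The gcd of the `(e,e)` minors of the `e × (e+i)` matrix
`(nI_e, m₁ᵀ, ..., m_iᵀ)`. -/
def minorGcd (e n : ℕ) {i : ℕ} (m : Fin i → Fin e → ℤ) : ℤ :=
  Finset.univ.gcd fun c : Fin e → (Fin e ⊕ Fin i) =>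
    (Matrix.of fun r s =>
      Sum.elim (fun l => if r = l then (n : ℤ) else 0) (fun l => m l r) (c s)).det

section Aux
open Finset Submodule

open Finset Submodule
variable {e : ℕ} {κ : Type*} [Fintype κ]
def rowGcd (f : κ → Fin e → ℤ) : ℤ :=
  Finset.univ.gcd fun p : Fin e → κ => (Matrix.of fun r s => f (p r) s).det

theorem rowGcd_nonneg {e : ℕ} {κ : Type*} [Fintype κ] (f : κ → Fin e → ℤ) : 0 ≤ rowGcd f := by
  have := Finset.normalize_gcd (s := (Finset.univ : Finset (Fin e → κ)))
    (f := fun p => (Matrix.of fun r s => f (p r) s).det)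
  rw [rowGcd, ← this, ← Int.abs_eq_normalize]
  positivity

theorem rowGcd_dvd_det (f : κ → Fin e → ℤ) (w : Fin e → Fin e → ℤ)
    (hw : ∀ r, w r ∈ Submodule.span ℤ (Set.range f)) :
    rowGcd f ∣ (Matrix.of fun r s => w r s).det := by
  have hc : ∀ r, ∃ c : κ → ℤ, ∑ j, c j • f j = w r := by
    intro r; exact (mem_span_range_iff_exists_fun ℤ).mp (hw r)
  choose c hc using hc
  have key : (Matrix.of fun r s => w r s).det
      = ∑ p : Fin e → κ, (Matrix.detRowAlternating (R := ℤ) (n := Fin e)).toMultilinearMap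
          (fun r => c r (p r) • f (p r)) := by
    have : (Matrix.of fun r s => w r s).det
        = (Matrix.detRowAlternating (R := ℤ) (n := Fin e)).toMultilinearMap
            (fun r => ∑ j, c r j • f j) := by
      simp only [hc]; rfl
    rw [this, MultilinearMap.map_sum]
  rw [key]
  refine Finset.dvd_sum fun p _ => ?_
  rw [MultilinearMap.map_smul_univ]
  exact Dvd.dvd.mul_left (Finset.gcd_dvd (Finset.mem_univ p)) _

theorem dvd_rowGcd_of_span_le {κ' : Type*} [Fintype κ'] {f : κ → Fin e → ℤ}
    {g : κ' → Fin e → ℤ} (h : Submodule.span ℤ (Set.range g) ≤ Submodule.span ℤ (Set.range f)) :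
    rowGcd f ∣ rowGcd g := by
  refine Finset.dvd_gcd fun p _ => ?_
  exact rowGcd_dvd_det f _ fun r => h (Submodule.subset_span (Set.mem_range_self _))

-- computation for a "diagonal" generating family
theorem rowGcd_snf (bM : Module.Basis (Fin e) ℤ (Fin e → ℤ)) (a : Fin e → ℤ) (emb : Fin e ↪ Fin e) :
    (rowGcd (fun j => a j • bM (emb j))).natAbs = (∏ j, a j).natAbs := by
  classical
  have hembb : Function.Bijective emb := Finite.injective_iff_bijective.mp emb.injective
  set B : Matrix (Fin e) (Fin e) ℤ := Matrix.of fun r s => bM r s with hB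
  have hBunit : IsUnit B.det := by
    have h2 : B = ((Pi.basisFun ℤ (Fin e)).toMatrix bM).transpose := by
      ext r s
      simp [hB, Module.Basis.toMatrix_apply, Pi.basisFun_repr]
    rw [h2, Matrix.det_transpose]
    have := (Pi.basisFun ℤ (Fin e)).invertibleToMatrix bM
    exact Matrix.isUnit_det_of_invertible _
  have hterm : ∀ p : Fin e → Fin e,
      (Matrix.of fun r s => (fun j => a j • bM (emb j)) (p r) s).det
        = (∏ r, a (p r)) * (Matrix.of fun r s => bM (emb (p r)) s).det := by
    intro p
    rw [← Matrix.det_mul_column]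
    congr 1
  have hA_dvd : (∏ j, a j) ∣ rowGcd (fun j => a j • bM (emb j)) := by
    refine Finset.dvd_gcd fun p _ => ?_
    rw [hterm p]
    by_cases hp : Function.Injective p
    · have : ∏ r, a (p r) = ∏ j, a j :=
        Fintype.prod_bijective p (Finite.injective_iff_bijective.mp hp) _ _ (fun _ => rfl)
      rw [this]; exact Dvd.dvd.mul_right dvd_rfl _
    · obtain ⟨x, y, hxy, hne⟩ := Function.not_injective_iff.mp hp
      have : (Matrix.of fun r s => bM (emb (p r)) s).det = 0 :=
        Matrix.det_zero_of_row_eq hne (by ext s; simp [hxy])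
      rw [this, mul_zero]; exact dvd_zero _
  have h_dvd_A : rowGcd (fun j => a j • bM (emb j)) ∣ (∏ j, a j) * B.det := by
    have := Finset.gcd_dvd (s := (Finset.univ : Finset (Fin e → Fin e)))
      (f := fun p : Fin e → Fin e =>
        (Matrix.of fun r s => (fun j => a j • bM (emb j)) (p r) s).det)
      (Finset.mem_univ ((Equiv.ofBijective emb hembb).symm : Fin e → Fin e))
    simp only [] at this
    rw [hterm] at this
    refine this.trans ?_
    have hprod : ∏ r, a ((Equiv.ofBijective emb hembb).symm r) = ∏ j, a j :=
      Fintype.prod_bijective _ (Equiv.bijective _) _ _ (fun _ => rfl)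
    rw [hprod]
    refine mul_dvd_mul_left _ ?_
    have : (Matrix.of fun r s => bM (emb ((Equiv.ofBijective emb hembb).symm r)) s) = B := by
      ext r s; simp [hB, Equiv.ofBijective_apply_symm_apply]
    rw [this]
  have hdetabs : B.det.natAbs = 1 := Int.isUnit_iff.mp hBunit |>.elim (by intro h; simp [h]) (by intro h; simp [h])
  refine Nat.dvd_antisymm ?_ (Int.natAbs_dvd_natAbs.mpr hA_dvd)
  have := Int.natAbs_dvd_natAbs.mpr h_dvd_A
  rwa [Int.natAbs_mul, hdetabs, mul_one] at this
theorem rowGcd_natAbs_eq_index (f : κ → Fin e → ℤ)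
    (hfin : (Submodule.span ℤ (Set.range f)).toAddSubgroup.index ≠ 0) :
    (rowGcd f).natAbs = (Submodule.span ℤ (Set.range f)).toAddSubgroup.index := by
  classical
  set N := Submodule.span ℤ (Set.range f) with hN
  obtain ⟨nn, snf⟩ := N.smithNormalForm (Pi.basisFun ℤ (Fin e))
  have hnn : nn = e := by simpa using snf.toAddSubgroup_index_ne_zero_iff.mp hfin
  subst hnn
  have hindex : N.toAddSubgroup.index = (∏ j, snf.a j).natAbs := by
    rw [snf.toAddSubgroup_index_eq_pow_mul_prod]
    simp only [Fintype.card_fin, Nat.sub_self, pow_zero, one_mul]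
    have : (∏ j, snf.a j).natAbs = ∏ j, (snf.a j).natAbs := by
      exact map_prod Int.natAbsHom snf.a Finset.univ
    rw [this]
    refine Finset.prod_congr rfl fun i _ => ?_
    rw [Ideal.span_singleton_toAddSubgroup_eq_zmultiples, Int.index_zmultiples]
  have hspan : Submodule.span ℤ (Set.range (fun j => snf.a j • snf.bM (snf.f j))) = N := by
    have h1 : (Set.range (fun j => snf.a j • snf.bM (snf.f j)))
        = Set.range (N.subtype ∘ snf.bN) :=
      congrArg Set.range (funext fun j => (snf.snf j).symm)
    rw [h1, Set.range_comp, ← Submodule.map_span, Module.Basis.span_eq, Submodule.map_subtype_top]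
  have h2 : (rowGcd f).natAbs = (rowGcd (fun j => snf.a j • snf.bM (snf.f j))).natAbs := by
    refine Nat.dvd_antisymm ?_ ?_ <;> rw [Int.natAbs_dvd_natAbs]
    · exact dvd_rowGcd_of_span_le (le_of_eq hspan)
    · exact dvd_rowGcd_of_span_le (le_of_eq hspan.symm)
  rw [h2, rowGcd_snf, hindex]
open Submodule

theorem index_sup_span_singleton {e : ℕ} (N : Submodule ℤ (Fin e → ℤ)) (v : Fin e → ℤ) :
    N.toAddSubgroup.index
      = addOrderOf (Submodule.Quotient.mk v : (Fin e → ℤ) ⧸ N)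
        * (N ⊔ span ℤ {v}).toAddSubgroup.index := by
  classical
  set S : Submodule ℤ ((Fin e → ℤ) ⧸ N) := (span ℤ {v}).map N.mkQ with hS
  have h1 : N.toAddSubgroup.index = Nat.card ((Fin e → ℤ) ⧸ N) := rfl
  have h2 : S.toAddSubgroup.index = Nat.card (((Fin e → ℤ) ⧸ N) ⧸ S) := rfl
  have h3 : Nat.card (((Fin e → ℤ) ⧸ N) ⧸ S) = (N ⊔ span ℤ {v}).toAddSubgroup.index := by
    have := Nat.card_congr (quotientQuotientEquivQuotientSup N (span ℤ {v})).toEquiv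
    rw [this]; rfl
  have h4 : Nat.card S = addOrderOf (Submodule.Quotient.mk v : (Fin e → ℤ) ⧸ N) := by
    have hSeq : S = span ℤ {(Submodule.Quotient.mk v : (Fin e → ℤ) ⧸ N)} := by
      rw [hS, Submodule.map_span, Set.image_singleton]; rfl
    have hz : (span ℤ {(Submodule.Quotient.mk v : (Fin e → ℤ) ⧸ N)} : Set ((Fin e → ℤ) ⧸ N))
        = (AddSubgroup.zmultiples (Submodule.Quotient.mk v : (Fin e → ℤ) ⧸ N) : Set ((Fin e → ℤ) ⧸ N)) := by
      ext x
      simp [Submodule.mem_span_singleton, AddSubgroup.mem_zmultiples_iff]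
    have : Nat.card S = Nat.card (AddSubgroup.zmultiples (Submodule.Quotient.mk v : (Fin e → ℤ) ⧸ N)) := by
      rw [hSeq]
      exact Nat.card_congr (Equiv.setCongr hz)
    rw [this, Nat.card_zmultiples]
  have hmul := AddSubgroup.card_mul_index (H := S.toAddSubgroup) (G := (Fin e → ℤ) ⧸ N)
  have h5 : Nat.card S.toAddSubgroup = Nat.card S := rfl
  rw [h1, ← hmul, h5, h4, h2, h3]
def lsFam (e n : ℕ) {i : ℕ} (m : Fin i → Fin e → ℤ) : (Fin e ⊕ Fin i) → (Fin e → ℤ) :=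
  Sum.elim (fun l => Pi.single l (n : ℤ)) m

theorem minorGcd_eq_rowGcd (e n : ℕ) {i : ℕ} (m : Fin i → Fin e → ℤ) :
    minorGcd e n m = rowGcd (lsFam e n m) := by
  unfold minorGcd rowGcd
  refine Finset.gcd_congr rfl fun c _ => ?_
  rw [← Matrix.det_transpose (Matrix.of fun r s => lsFam e n m (c r) s)]
  congr 1
  ext r s
  show Sum.elim (fun l => if r = l then (n : ℤ) else 0) (fun l => m l r) (c s)
    = lsFam e n m (c s) r
  cases h : c s with
  | inl l => simp [lsFam, Pi.single_apply]
  | inr l => simp [lsFam]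

theorem sum_single_eq_smul (e n : ℕ) (a : Fin e → ℤ) :
    ∑ l, a l • Pi.single l (n : ℤ) = (n : ℤ) • a := by
  ext s
  simp [Finset.sum_apply, Pi.single_apply, mul_comm]

theorem latticeSpan_eq_span (e n : ℕ) {i : ℕ} (m : Fin i → Fin e → ℤ) :
    latticeSpan e n m = ↑(Submodule.span ℤ (Set.range (lsFam e n m))) := by
  ext v
  rw [SetLike.mem_coe, mem_span_range_iff_exists_fun]
  constructor
  · rintro ⟨a, c, rfl⟩
    refine ⟨Sum.elim a c, ?_⟩
    rw [Fintype.sum_sum_type]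
    simp only [Sum.elim_inl, Sum.elim_inr, lsFam]
    rw [sum_single_eq_smul]
  · rintro ⟨c, rfl⟩
    refine ⟨fun l => c (Sum.inl l), fun j => c (Sum.inr j), ?_⟩
    rw [Fintype.sum_sum_type]
    simp only [lsFam, Sum.elim_inl, Sum.elim_inr]
    rw [sum_single_eq_smul]

theorem span_lsFam_snoc (e n : ℕ) {i : ℕ} (m : Fin i → Fin e → ℤ) (v : Fin e → ℤ) :
    Submodule.span ℤ (Set.range (lsFam e n (Fin.snoc m v)))
      = Submodule.span ℤ (Set.range (lsFam e n m)) ⊔ Submodule.span ℤ {v} := by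
  have hsnoc : Set.range (Fin.snoc m v : Fin (i+1) → Fin e → ℤ) = Set.range m ∪ {v} := by
    ext x
    constructor
    · rintro ⟨j, rfl⟩
      induction j using Fin.lastCases with
      | last => right; simp
      | cast j => left; exact ⟨j, by simp⟩
    · rintro (⟨j, rfl⟩ | rfl)
      · exact ⟨j.castSucc, by simp⟩
      · exact ⟨Fin.last i, by simp⟩
  unfold lsFam
  rw [Set.Sum.elim_range, Set.Sum.elim_range, hsnoc, ← Set.union_assoc,
    Submodule.span_union, Submodule.span_union]

theorem lsFam_index_ne_zero (e n : ℕ) (hn : 0 < n) {i : ℕ} (m : Fin i → Fin e → ℤ) :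
    (Submodule.span ℤ (Set.range (lsFam e n m))).toAddSubgroup.index ≠ 0 := by
  classical
  set N := Submodule.span ℤ (Set.range (lsFam e n m))
  set P : AddSubgroup (Fin e → ℤ) :=
    AddSubgroup.pi Set.univ (fun _ : Fin e => AddSubgroup.zmultiples (n : ℤ)) with hP
  have hPle : P ≤ N.toAddSubgroup := by
    intro x hx
    rw [hP, AddSubgroup.mem_pi] at hx
    have hdvd : ∀ r, (n : ℤ) ∣ x r := by
      intro r
      have := hx r (Set.mem_univ r)
      rwa [Int.mem_zmultiples_iff] at this
    have hx' : x = (n : ℤ) • fun r => x r / n := by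
      ext r
      simp only [Pi.smul_apply, smul_eq_mul]
      exact (Int.mul_ediv_cancel' (hdvd r)).symm
    rw [Submodule.mem_toAddSubgroup, mem_span_range_iff_exists_fun]
    refine ⟨Sum.elim (fun r => x r / n) 0, ?_⟩
    rw [Fintype.sum_sum_type]
    simp only [lsFam, Sum.elim_inl, Sum.elim_inr, Pi.zero_apply, zero_smul,
      Finset.sum_const_zero, add_zero]
    rw [sum_single_eq_smul]
    exact hx'.symm
  have hPidx : P.index = n ^ e := by
    rw [hP, AddSubgroup.index_pi]
    simp [Int.index_zmultiples]
  have hdvd := AddSubgroup.index_dvd_of_le hPle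
  intro h0
  rw [h0, hPidx] at hdvd
  exact (pow_ne_zero e hn.ne') (zero_dvd_iff.mp hdvd)

end Aux

/-- with `D_{i+1}` the gcd of the minors of `(nI_e, m₁ᵀ,...,m_iᵀ)`
and `D̃` the gcd of the minors of `(nI_e, m₁ᵀ,...,m_iᵀ, vᵀ)` for a nonzero `v`:
`v ∈ (nℤ)^e + ∑ m_jℤ ↔ D_{i+1} = D̃`; moreover `(D_{i+1}/D̃)·v` belongs to this
subgroup, and if `D_{i+1} > D̃` then `k·v` does not, for `1 ≤ k < D_{i+1}/D̃`. -/
theorem stmt_10 (e n : ℕ) (hn : 0 < n) (i : ℕ)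
    (m : Fin i → Fin e → ℤ) (v : Fin e → ℤ) (hv : v ≠ 0) :
    (v ∈ latticeSpan e n m ↔ minorGcd e n m = minorGcd e n (Fin.snoc m v)) ∧
    (minorGcd e n m / minorGcd e n (Fin.snoc m v)) • v ∈ latticeSpan e n m ∧
    (minorGcd e n (Fin.snoc m v) < minorGcd e n m →
      ∀ k : ℤ, 1 ≤ k → k < minorGcd e n m / minorGcd e n (Fin.snoc m v) →
        k • v ∉ latticeSpan e n m) := by
  classical
  set N : Submodule ℤ (Fin e → ℤ) := Submodule.span ℤ (Set.range (lsFam e n m)) with hN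
  set N' : Submodule ℤ (Fin e → ℤ) := N ⊔ Submodule.span ℤ {v} with hN'
  have hNidx : N.toAddSubgroup.index ≠ 0 := lsFam_index_ne_zero e n hn m
  have hN'span : Submodule.span ℤ (Set.range (lsFam e n (Fin.snoc m v))) = N' := by
    rw [hN', hN]; exact span_lsFam_snoc e n m v
  have hN'idx : N'.toAddSubgroup.index ≠ 0 := by
    rw [← hN'span]; exact lsFam_index_ne_zero e n hn (Fin.snoc m v)
  -- identify the two gcds with the indices
  have hD : minorGcd e n m = (N.toAddSubgroup.index : ℤ) := by
    rw [minorGcd_eq_rowGcd, ← Int.natAbs_of_nonneg (rowGcd_nonneg (lsFam e n m))]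
    exact congrArg (Nat.cast : ℕ → ℤ) (rowGcd_natAbs_eq_index (lsFam e n m) hNidx)
  have hD' : minorGcd e n (Fin.snoc m v) = (N'.toAddSubgroup.index : ℤ) := by
    rw [minorGcd_eq_rowGcd,
      ← Int.natAbs_of_nonneg (rowGcd_nonneg (lsFam e n (Fin.snoc m v)))]
    have := rowGcd_natAbs_eq_index (lsFam e n (Fin.snoc m v)) (hN'span ▸ hN'idx)
    rw [hN'span] at this
    exact congrArg (Nat.cast : ℕ → ℤ) this
  set t := addOrderOf (Submodule.Quotient.mk v : (Fin e → ℤ) ⧸ N) with ht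
  have hkey : N.toAddSubgroup.index = t * N'.toAddSubgroup.index := by
    rw [hN']; exact index_sup_span_singleton N v
  have ht0 : t ≠ 0 := by
    intro h; rw [h, zero_mul] at hkey; exact hNidx hkey
  have hdivnat : N.toAddSubgroup.index / N'.toAddSubgroup.index = t := by
    rw [hkey, Nat.mul_div_assoc t (dvd_refl _), Nat.div_self (Nat.pos_of_ne_zero hN'idx), mul_one]
  have hdiv : minorGcd e n m / minorGcd e n (Fin.snoc m v) = (t : ℤ) := by
    rw [hD, hD', hkey]
    push_cast
    exact Int.mul_ediv_cancel _ (by exact_mod_cast hN'idx)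
  have hmemN : ∀ w : Fin e → ℤ, w ∈ latticeSpan e n m ↔ w ∈ N := by
    intro w
    rw [hN, ← SetLike.mem_coe, ← latticeSpan_eq_span]
  have hmk : ∀ w : Fin e → ℤ, w ∈ N ↔ (Submodule.Quotient.mk w : (Fin e → ℤ) ⧸ N) = 0 :=
    fun w => (Submodule.Quotient.mk_eq_zero N).symm
  refine ⟨?_, ?_, ?_⟩
  · rw [hmemN, hmk, hD, hD', ← AddMonoid.addOrderOf_eq_one_iff, ← ht]
    constructor
    · intro h1
      rw [hkey, h1, one_mul]
    · intro h
      have : t * N'.toAddSubgroup.index = 1 * N'.toAddSubgroup.index := by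
        rw [one_mul, ← hkey]; exact_mod_cast h
      exact Nat.eq_of_mul_eq_mul_right (Nat.pos_of_ne_zero hN'idx) this
  · rw [hdiv, hmemN, hmk]
    have : (Submodule.Quotient.mk ((t : ℤ) • v) : (Fin e → ℤ) ⧸ N)
        = (t : ℤ) • (Submodule.Quotient.mk v : (Fin e → ℤ) ⧸ N) := rfl
    rw [this, natCast_zsmul]
    exact addOrderOf_nsmul_eq_zero _
  · intro _ k hk1 hkt hmem
    rw [hmemN, hmk] at hmem
    have hsm : (k : ℤ) • (Submodule.Quotient.mk v : (Fin e → ℤ) ⧸ N) = 0 := by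
      rw [← hmem]; rfl
    have hk0 : (0 : ℤ) ≤ k := le_trans zero_le_one hk1
    have : (k.toNat : ℤ) • (Submodule.Quotient.mk v : (Fin e → ℤ) ⧸ N) = 0 := by
      rwa [Int.toNat_of_nonneg hk0]
    rw [natCast_zsmul] at this
    have hdvd := addOrderOf_dvd_of_nsmul_eq_zero this
    rw [← ht] at hdvd
    have hklt : k.toNat < t := by
      rw [hdiv] at hkt
      omega
    have hkpos : 0 < k.toNat := by omega
    exact absurd (Nat.le_of_dvd hkpos hdvd) (not_le.mpr hklt)
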